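/- Let p : ℝ → ℍ be a function with p(t).re = 0 for all t, and let q : ℝ → ℍ be differentiable with q'(t) = p(t) * q(t) for all t ∈ ℝ. Then ‖q(t)‖ = ‖q(0)‖ for all t ∈ ℝ; equivalently, the function t ↦ ‖q(t)‖² is constant. -/

import Mathlib

open scoped Quaternion

open Quaternion

/-- The norm is a first integral of the flow of the time-dependent linear vector field
`q ↦ p(t)·q` on `ℍ` when `p(t)` is pure imaginary for every `t`. -/
theorem quaternion_norm_constant_of_pure_linear_flow
    (p q : ℝ → ℍ[ℝ])
    (hp : ∀ t, (p t).re = 0)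
    (hq : ∀ t, HasDerivAt q (p t * q t) t) :
    ∀ t, ‖q t‖ = ‖q 0‖ := by
  have key : ∀ t, HasDerivAt (fun t => @inner ℝ _ _ (q t) (q t)) 0 t := by
    intro t
    have h := (hq t).inner ℝ (hq t)
    convert h using 1
    · rfl
    · rfl
    have h0 : @inner ℝ ℍ[ℝ] _ (p t * q t) (q t) = 0 := by
      simp [Quaternion.inner_def, Quaternion.re_mul, hp t]
      ring
    have h0' : @inner ℝ ℍ[ℝ] _ (q t) (p t * q t) = 0 := by
      simp [Quaternion.inner_def, Quaternion.re_mul, hp t]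
      ring
    rw [h0, h0']
    simp
  have hconst : ∀ t, @inner ℝ ℍ[ℝ] _ (q t) (q t) = @inner ℝ ℍ[ℝ] _ (q 0) (q 0) := by
    intro t
    exact is_const_of_deriv_eq_zero (f := fun t => @inner ℝ ℍ[ℝ] _ (q t) (q t))
      (fun t => (key t).differentiableAt) (fun t => (key t).deriv) t 0
  intro t
  have h1 := hconst t
  rw [real_inner_self_eq_norm_sq, real_inner_self_eq_norm_sq] at h1
  calc ‖q t‖ = Real.sqrt (‖q t‖ ^ 2) := (Real.sqrt_sq (norm_nonneg _)).symm
    _ = Real.sqrt (‖q 0‖ ^ 2) := by rw [h1]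
    _ = ‖q 0‖ := Real.sqrt_sq (norm_nonneg _)
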